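/- arXiv:1409.1465 — 2 statements merged into one kernel-verified Lean document; each statement's English description precedes it below -/
import Mathlib

section
/- Let R be an n × n^{m−1} column-stochastic matrix, v a stochastic vector, α < 1/(m−1), and let x be the unique stochastic solution of x = α R (x⊗⋯⊗x) + (1−α)v. Define the fixed-point iteration x^{(k+1)} = α R (x^{(k)} ⊗ ⋯ ⊗ x^{(k)}) + (1−α) v starting from a stochastic x^{(0)}. Then each x^{(k)} is stochastic and ‖x^{(k)} − x‖₁ ≤ (α(m−1))^k ‖x^{(0)} − x‖₁ ≤ 2(α(m−1))^k. -/
open Finset Matrix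

def StochV {α : Type*} [Fintype α] (x : α → ℝ) : Prop :=
  (∀ i, 0 ≤ x i) ∧ ∑ i, x i = 1

def norm1 {α : Type*} [Fintype α] (x : α → ℝ) : ℝ := ∑ i, |x i|

def kron {α β : Type*} (a : α → ℝ) (b : β → ℝ) : α × β → ℝ := fun p => a p.1 * b p.2

def kpow {n : ℕ} (x : Fin n → ℝ) (k : ℕ) : (Fin k → Fin n) → ℝ := fun f => ∏ i, x (f i)

def ColStoch {α β : Type*} [Fintype α] (R : Matrix α β ℝ) : Prop :=
  (∀ i j, 0 ≤ R i j) ∧ ∀ j, ∑ i, R i j = 1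

lemma kpow_sum {n k : ℕ} (x : Fin n → ℝ) :
    ∑ f : Fin k → Fin n, kpow x k f = (∑ j, x j) ^ k := by
  unfold kpow
  rw [← Fintype.piFinset_univ, ← Finset.prod_univ_sum]
  simp

lemma stoch_kpow {n k : ℕ} {x : Fin n → ℝ} (hx : StochV x) : StochV (kpow x k) := by
  constructor
  · intro f; exact Finset.prod_nonneg fun i _ => hx.1 _
  · rw [kpow_sum, hx.2, one_pow]

lemma stoch_mulVec {n : ℕ} {β : Type*} [Fintype β] {R : Matrix (Fin n) β ℝ}
    (hR : ColStoch R) {y : β → ℝ} (hy : StochV y) : StochV (R.mulVec y) := by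
  constructor
  · intro i
    exact Finset.sum_nonneg fun j _ => mul_nonneg (hR.1 i j) (hy.1 j)
  · rw [show ∑ i, R.mulVec y i = ∑ j, (∑ i, R i j) * y j by
      simp only [Matrix.mulVec, dotProduct, Finset.sum_mul]
      exact Finset.sum_comm]
    simp only [hR.2, one_mul, hy.2]

lemma norm1_mulVec_le {n : ℕ} {β : Type*} [Fintype β] {R : Matrix (Fin n) β ℝ}
    (hR : ColStoch R) (z : β → ℝ) : norm1 (R.mulVec z) ≤ norm1 z := by
  unfold norm1
  calc ∑ i, |R.mulVec z i| ≤ ∑ i, ∑ j, R i j * |z j| := by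
        refine Finset.sum_le_sum fun i _ => ?_
        refine (Finset.abs_sum_le_sum_abs _ _).trans ?_
        refine Finset.sum_le_sum fun j _ => ?_
        rw [abs_mul, abs_of_nonneg (hR.1 i j)]
    _ = ∑ j, (∑ i, R i j) * |z j| := by
        rw [Finset.sum_comm]; simp [Finset.sum_mul]
    _ = ∑ j, |z j| := by simp [hR.2]

lemma norm1_kpow_sub {n : ℕ} {x y : Fin n → ℝ} (hx : StochV x) (hy : StochV y) :
    ∀ k, norm1 (kpow y k - kpow x k) ≤ k * norm1 (y - x) := by
  intro k
  induction k with
  | zero => simp [norm1, kpow]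
  | succ k ih =>
    have key : norm1 (kpow y (k+1) - kpow x (k+1)) ≤
        norm1 (y - x) + norm1 (kpow y k - kpow x k) := by
      unfold norm1
      rw [← Equiv.sum_comp (Fin.consEquiv (fun _ => Fin n))
        (fun f => |(kpow y (k+1) - kpow x (k+1)) f|), Fintype.sum_prod_type]
      have hexp : ∀ (a : Fin n) (t : Fin k → Fin n),
          (kpow y (k+1) - kpow x (k+1)) ((Fin.consEquiv (fun _ => Fin n)) (a, t)) =
          (y a - x a) * kpow y k t + x a * (kpow y k t - kpow x k t) := by
        intro a t
        simp only [Pi.sub_apply, Fin.consEquiv, Equiv.coe_fn_mk, kpow]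
        rw [Fin.prod_univ_succ, Fin.prod_univ_succ]
        simp only [Fin.cons_zero, Fin.cons_succ]
        ring
      calc ∑ a, ∑ t, |(kpow y (k+1) - kpow x (k+1)) ((Fin.consEquiv (fun _ => Fin n)) (a, t))|
          ≤ ∑ a : Fin n, ∑ t : Fin k → Fin n,
              (|y a - x a| * kpow y k t + x a * |kpow y k t - kpow x k t|) := by
            refine Finset.sum_le_sum fun a _ => Finset.sum_le_sum fun t _ => ?_
            rw [hexp a t]
            refine (abs_add_le _ _).trans ?_
            rw [abs_mul, abs_mul, abs_of_nonneg ((stoch_kpow hy).1 t),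
              abs_of_nonneg (hx.1 a)]
        _ = ∑ a : Fin n, |y a - x a| + ∑ t : Fin k → Fin n, |kpow y k t - kpow x k t| := by
            simp only [Finset.sum_add_distrib, ← Finset.mul_sum]
            rw [(stoch_kpow hy).2]
            simp only [mul_one]
            rw [← Finset.sum_mul, hx.2, one_mul]
        _ = _ := by simp [Pi.sub_apply]
    calc norm1 (kpow y (k+1) - kpow x (k+1)) ≤ norm1 (y - x) + norm1 (kpow y k - kpow x k) :=
          key
      _ ≤ norm1 (y - x) + k * norm1 (y - x) := by linarith
      _ = (k + 1 : ℕ) * norm1 (y - x) := by push_cast; ring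

lemma norm1_nonneg {α : Type*} [Fintype α] (x : α → ℝ) : 0 ≤ norm1 x :=
  Finset.sum_nonneg fun i _ => abs_nonneg _

theorem stmt6 {n m : ℕ} (hm : 2 ≤ m)
    (R : Matrix (Fin n) (Fin (m - 1) → Fin n) ℝ) (hR : ColStoch R)
    (v : Fin n → ℝ) (hv : StochV v)
    (α : ℝ) (hα0 : 0 ≤ α) (hα : α < 1 / ((m : ℝ) - 1))
    (x : Fin n → ℝ) (hx : StochV x)
    (hxe : x = fun i => α * R.mulVec (kpow x (m - 1)) i + (1 - α) * v i)
    (X : ℕ → (Fin n → ℝ)) (hX0 : StochV (X 0))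
    (hrec : ∀ k, X (k + 1) = fun i => α * R.mulVec (kpow (X k) (m - 1)) i + (1 - α) * v i) :
    ∀ k, StochV (X k) ∧
      norm1 (X k - x) ≤ (α * ((m : ℝ) - 1)) ^ k * norm1 (X 0 - x) ∧
      (α * ((m : ℝ) - 1)) ^ k * norm1 (X 0 - x) ≤ 2 * (α * ((m : ℝ) - 1)) ^ k := by
  have hm1 : (1 : ℝ) ≤ (m : ℝ) - 1 := by
    have : (2 : ℝ) ≤ (m : ℝ) := by exact_mod_cast hm
    linarith
  have hcast : ((m - 1 : ℕ) : ℝ) = (m : ℝ) - 1 := by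
    have : 1 ≤ m := le_trans (by norm_num) hm
    push_cast [Nat.cast_sub this]
    ring
  have hα1 : α ≤ 1 := by
    have h1 : 1 / ((m : ℝ) - 1) ≤ 1 := by
      rw [div_le_one (by linarith)]; linarith
    linarith
  have hβ0 : 0 ≤ α * ((m : ℝ) - 1) := mul_nonneg hα0 (by linarith)
  have hX02 : norm1 (X 0 - x) ≤ 2 := by
    unfold norm1
    calc ∑ i, |(X 0 - x) i| ≤ ∑ i, (X 0 i + x i) := by
          refine Finset.sum_le_sum fun i _ => ?_
          rw [Pi.sub_apply]
          refine (abs_sub _ _).trans ?_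
          rw [abs_of_nonneg (hX0.1 i), abs_of_nonneg (hx.1 i)]
      _ = 2 := by rw [Finset.sum_add_distrib, hX0.2, hx.2]; norm_num
  intro k
  induction k with
  | zero =>
    refine ⟨hX0, by simp, ?_⟩
    simpa using hX02
  | succ k ih =>
    obtain ⟨hXk, hb, _⟩ := ih
    have hstoch : StochV (X (k + 1)) := by
      rw [hrec k]
      have h1 := stoch_mulVec hR (stoch_kpow (k := m - 1) hXk)
      constructor
      · intro i
        exact add_nonneg (mul_nonneg hα0 (h1.1 i)) (mul_nonneg (by linarith) (hv.1 i))
      · rw [Finset.sum_add_distrib, ← Finset.mul_sum, ← Finset.mul_sum, h1.2, hv.2]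
        ring
    refine ⟨hstoch, ?_, ?_⟩
    · have hdiff : X (k + 1) - x =
          fun i => α * R.mulVec (kpow (X k) (m - 1) - kpow x (m - 1)) i := by
        funext i
        rw [Matrix.mulVec_sub]
        simp only [Pi.sub_apply, hrec k]
        conv_lhs => rw [hxe]
        ring
      have h2 : norm1 (X (k + 1) - x) =
          α * norm1 (R.mulVec (kpow (X k) (m - 1) - kpow x (m - 1))) := by
        rw [hdiff]
        unfold norm1
        rw [Finset.mul_sum]
        refine Finset.sum_congr rfl fun i _ => ?_
        rw [abs_mul, abs_of_nonneg hα0]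
      calc norm1 (X (k + 1) - x)
          = α * norm1 (R.mulVec (kpow (X k) (m - 1) - kpow x (m - 1))) := h2
        _ ≤ α * norm1 (kpow (X k) (m - 1) - kpow x (m - 1)) :=
            mul_le_mul_of_nonneg_left (norm1_mulVec_le hR _) hα0
        _ ≤ α * ((m - 1 : ℕ) * norm1 (X k - x)) :=
            mul_le_mul_of_nonneg_left (norm1_kpow_sub hx hXk (m - 1)) hα0
        _ = (α * ((m : ℝ) - 1)) * norm1 (X k - x) := by rw [hcast]; ring
        _ ≤ (α * ((m : ℝ) - 1)) * ((α * ((m : ℝ) - 1)) ^ k * norm1 (X 0 - x)) :=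
            mul_le_mul_of_nonneg_left hb hβ0
        _ = (α * ((m : ℝ) - 1)) ^ (k + 1) * norm1 (X 0 - x) := by ring
    · have := pow_nonneg hβ0 (k + 1)
      nlinarith [hX02]
end

section
/- Let R be an n × n^{m−1} column-stochastic matrix, v stochastic, α < 1/(m−1), and x the unique stochastic multilinear PageRank solution. Suppose the sequence x^{(k)} of stochastic vectors satisfies the inner-outer recurrence x^{(k+1)} = (α/(m−1)) R̄ (x^{(k+1)} ⊗ ⋯ ⊗ x^{(k+1)}) + (1 − α/(m−1)) x^{(k)}, where R̄ = αR + (1−α)v eᵀ. Then ‖x^{(k)} − x‖₁ ≤ ((1 − α/(m−1))/(1 − α²))^k ‖x^{(0)} − x‖₁, and the rate (1 − α/(m−1))/(1 − α²) < 1. -/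
open Finset Matrix

def StochVec {α : Type*} [Fintype α] (x : α → ℝ) : Prop :=
  (∀ i, 0 ≤ x i) ∧ ∑ i, x i = 1

lemma sum_pi_succ {n k : ℕ} (F : (Fin (k+1) → Fin n) → ℝ) :
    ∑ f, F f = ∑ a : Fin n, ∑ g : Fin k → Fin n, F (Fin.cons a g) := by
  rw [← (Fin.consEquiv (fun _ => Fin n)).sum_comp F, Fintype.sum_prod_type]
  rfl

lemma kpow_cons {n k : ℕ} (y : Fin n → ℝ) (a : Fin n) (g : Fin k → Fin n) :
    kpow y (k+1) (Fin.cons a g) = y a * kpow y k g := by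
  unfold kpow
  rw [Fin.prod_univ_succ]
  simp [Fin.cons_succ]

lemma kpow_nonneg {n k : ℕ} (y : Fin n → ℝ) (hy : ∀ i, 0 ≤ y i) (f : Fin k → Fin n) :
    0 ≤ kpow y k f := Finset.prod_nonneg (fun i _ => hy (f i))

lemma sum_kpow {n : ℕ} (y : Fin n → ℝ) (hy : ∑ i, y i = 1) :
    ∀ k, ∑ f, kpow y k f = 1 := by
  intro k
  induction k with
  | zero => simp [kpow]
  | succ k ih =>
      rw [sum_pi_succ]
      simp only [kpow_cons, ← Finset.mul_sum, ih, mul_one, hy]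

lemma kpow_diff {n : ℕ} (y z : Fin n → ℝ) (hy : StochVec y) (hz : StochVec z) :
    ∀ k, ∑ f, |kpow y k f - kpow z k f| ≤ (k : ℝ) * ∑ i, |y i - z i| := by
  intro k
  induction k with
  | zero => simp [kpow]
  | succ k ih =>
      rw [sum_pi_succ]
      have step : ∀ a : Fin n, ∑ g : Fin k → Fin n, |kpow y (k+1) (Fin.cons a g) - kpow z (k+1) (Fin.cons a g)|
          ≤ |y a - z a| * (∑ g : Fin k → Fin n, kpow y k g)
            + z a * ∑ g : Fin k → Fin n, |kpow y k g - kpow z k g| := by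
        intro a
        rw [Finset.mul_sum, Finset.mul_sum, ← Finset.sum_add_distrib]
        apply Finset.sum_le_sum
        intro g _
        rw [kpow_cons, kpow_cons]
        have h1 : y a * kpow y k g - z a * kpow z k g
            = (y a - z a) * kpow y k g + z a * (kpow y k g - kpow z k g) := by ring
        rw [h1]
        calc |(y a - z a) * kpow y k g + z a * (kpow y k g - kpow z k g)|
            ≤ |(y a - z a) * kpow y k g| + |z a * (kpow y k g - kpow z k g)| := abs_add_le _ _
          _ = |y a - z a| * kpow y k g + z a * |kpow y k g - kpow z k g| := by
              rw [abs_mul, abs_mul, abs_of_nonneg (kpow_nonneg y hy.1 g),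
                abs_of_nonneg (hz.1 a)]
      calc ∑ a, ∑ g : Fin k → Fin n, |kpow y (k+1) (Fin.cons a g) - kpow z (k+1) (Fin.cons a g)|
          ≤ ∑ a, (|y a - z a| * (∑ g : Fin k → Fin n, kpow y k g)
            + z a * ∑ g : Fin k → Fin n, |kpow y k g - kpow z k g|) :=
            Finset.sum_le_sum fun a _ => step a
        _ = (∑ a, |y a - z a|) + ∑ g : Fin k → Fin n, |kpow y k g - kpow z k g| := by
            rw [Finset.sum_add_distrib, ← Finset.sum_mul, ← Finset.sum_mul,
              sum_kpow y hy.2, hz.2, mul_one, one_mul]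
        _ ≤ (∑ a, |y a - z a|) + (k : ℝ) * ∑ i, |y i - z i| := by linarith
        _ = ((k+1 : ℕ) : ℝ) * ∑ i, |y i - z i| := by push_cast; ring

lemma mulVec_norm1_le {n : ℕ} {β : Type*} [Fintype β] (M : Matrix (Fin n) β ℝ)
    (hM : ColStoch M) (w : β → ℝ) : ∑ i, |M.mulVec w i| ≤ ∑ j, |w j| := by
  calc ∑ i, |M.mulVec w i| ≤ ∑ i, ∑ j, M i j * |w j| := by
        apply Finset.sum_le_sum
        intro i _
        refine (Finset.abs_sum_le_sum_abs _ _).trans ?_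
        apply Finset.sum_le_sum
        intro j _
        rw [abs_mul, abs_of_nonneg (hM.1 i j)]
    _ = ∑ j, (∑ i, M i j) * |w j| := by rw [Finset.sum_comm]; simp [Finset.sum_mul]
    _ = ∑ j, |w j| := by simp [hM.2]

theorem stmt10 {n m : ℕ} (hm : 2 ≤ m)
    (R : Matrix (Fin n) (Fin (m - 1) → Fin n) ℝ) (hR : ColStoch R)
    (v : Fin n → ℝ) (hv : StochVec v)
    (α : ℝ) (hα0 : 0 < α) (hα : α < 1 / ((m : ℝ) - 1))
    (x : Fin n → ℝ) (hx : StochVec x)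
    (hxe : x = fun i => α * R.mulVec (kpow x (m - 1)) i + (1 - α) * v i)
    (Rbar : Matrix (Fin n) (Fin (m - 1) → Fin n) ℝ)
    (hRbar : Rbar = fun i j => α * R i j + (1 - α) * v i)
    (X : ℕ → (Fin n → ℝ)) (hXs : ∀ k, StochVec (X k))
    (hrec : ∀ k, X (k + 1) = fun i =>
      (α / ((m : ℝ) - 1)) * Rbar.mulVec (kpow (X (k + 1)) (m - 1)) i
        + (1 - α / ((m : ℝ) - 1)) * X k i) :
    (∀ k, norm1 (X k - x) ≤ ((1 - α / ((m : ℝ) - 1)) / (1 - α ^ 2)) ^ k * norm1 (X 0 - x)) ∧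
    (1 - α / ((m : ℝ) - 1)) / (1 - α ^ 2) < 1 := by
  have hpc : ((m - 1 : ℕ) : ℝ) = (m : ℝ) - 1 := by
    rw [Nat.cast_sub (by omega : 1 ≤ m)]; simp
  have hP1 : (1 : ℝ) ≤ (m : ℝ) - 1 := by
    have : (2 : ℝ) ≤ (m : ℝ) := by exact_mod_cast hm
    linarith
  have hP0 : (0 : ℝ) < (m : ℝ) - 1 := by linarith
  have hαP : α * ((m : ℝ) - 1) < 1 := by
    calc α * ((m : ℝ) - 1) < (1 / ((m : ℝ) - 1)) * ((m : ℝ) - 1) :=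
          mul_lt_mul_of_pos_right hα hP0
      _ = 1 := by field_simp
  have hα1 : α < 1 := by nlinarith
  have hα2 : α ^ 2 < α / ((m : ℝ) - 1) := by
    rw [lt_div_iff₀ hP0]; nlinarith
  have hdivle : α / ((m : ℝ) - 1) ≤ α := div_le_self hα0.le hP1
  have hrate0 : (0 : ℝ) < 1 - α ^ 2 := by nlinarith
  have hnum0 : (0 : ℝ) < 1 - α / ((m : ℝ) - 1) := by nlinarith
  have hr0 : 0 ≤ (1 - α / ((m : ℝ) - 1)) / (1 - α ^ 2) := by positivity
  have hrlt1 : (1 - α / ((m : ℝ) - 1)) / (1 - α ^ 2) < 1 := by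
    rw [div_lt_one hrate0]; linarith
  have hsumx : ∑ f, kpow x (m - 1) f = 1 := sum_kpow x hx.2 (m - 1)
  have hxfix : Rbar.mulVec (kpow x (m - 1)) = x := by
    funext i
    rw [hRbar]
    show ∑ j, (α * R i j + (1 - α) * v i) * kpow x (m - 1) j = x i
    calc ∑ j, (α * R i j + (1 - α) * v i) * kpow x (m - 1) j
        = α * ∑ j, R i j * kpow x (m - 1) j
            + (1 - α) * v i * ∑ j, kpow x (m - 1) j := by
          rw [Finset.mul_sum, Finset.mul_sum, ← Finset.sum_add_distrib]
          exact Finset.sum_congr rfl fun j _ => by ring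
      _ = α * R.mulVec (kpow x (m - 1)) i + (1 - α) * v i := by
          rw [hsumx]; simp [Matrix.mulVec, dotProduct]
      _ = x i := by conv_rhs => rw [hxe]
  have key : ∀ k, norm1 (X (k+1) - x)
      ≤ ((1 - α / ((m : ℝ) - 1)) / (1 - α ^ 2)) * norm1 (X k - x) := by
    intro k
    have hsumu : ∑ f, kpow (X (k+1)) (m - 1) f = 1 := sum_kpow _ (hXs (k+1)).2 (m - 1)
    have hRbarDiff : ∀ i, Rbar.mulVec (kpow (X (k+1)) (m - 1)) i
          - Rbar.mulVec (kpow x (m - 1)) i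
        = α * R.mulVec (fun j => kpow (X (k+1)) (m - 1) j - kpow x (m - 1) j) i := by
      intro i
      rw [hRbar]
      show (∑ j, (α * R i j + (1 - α) * v i) * kpow (X (k+1)) (m - 1) j)
          - (∑ j, (α * R i j + (1 - α) * v i) * kpow x (m - 1) j)
          = α * ∑ j, R i j * (kpow (X (k+1)) (m - 1) j - kpow x (m - 1) j)
      calc (∑ j, (α * R i j + (1 - α) * v i) * kpow (X (k+1)) (m - 1) j)
            - (∑ j, (α * R i j + (1 - α) * v i) * kpow x (m - 1) j)
          = ∑ j, (α * (R i j * (kpow (X (k+1)) (m - 1) j - kpow x (m - 1) j))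
              + (1 - α) * v i * (kpow (X (k+1)) (m - 1) j - kpow x (m - 1) j)) := by
            rw [← Finset.sum_sub_distrib]
            exact Finset.sum_congr rfl fun j _ => by ring
        _ = α * (∑ j, R i j * (kpow (X (k+1)) (m - 1) j - kpow x (m - 1) j))
              + (1 - α) * v i * ((∑ j, kpow (X (k+1)) (m - 1) j)
                - ∑ j, kpow x (m - 1) j) := by
            rw [Finset.sum_add_distrib, ← Finset.mul_sum, ← Finset.mul_sum,
              Finset.sum_sub_distrib]
        _ = α * ∑ j, R i j * (kpow (X (k+1)) (m - 1) j - kpow x (m - 1) j) := by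
            rw [hsumu, hsumx]; ring
    have hdiff : ∀ i, (X (k+1) - x) i
        = (α / ((m : ℝ) - 1)) * α
            * R.mulVec (fun j => kpow (X (k+1)) (m - 1) j - kpow x (m - 1) j) i
          + (1 - α / ((m : ℝ) - 1)) * (X k - x) i := by
      intro i
      have h1 : X (k+1) i = (α / ((m : ℝ) - 1)) * Rbar.mulVec (kpow (X (k+1)) (m - 1)) i
          + (1 - α / ((m : ℝ) - 1)) * X k i := by
        conv_lhs => rw [hrec k]
      have h3 : Rbar.mulVec (kpow (X (k+1)) (m - 1)) i
          = x i + α * R.mulVec (fun j => kpow (X (k+1)) (m - 1) j - kpow x (m - 1) j) i := by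
        have h4 := hRbarDiff i
        have h5 : Rbar.mulVec (kpow x (m - 1)) i = x i := by rw [hxfix]
        linarith
      simp only [Pi.sub_apply]
      rw [h1, h3]
      ring
    have hRd : ∑ i, |R.mulVec (fun j => kpow (X (k+1)) (m - 1) j - kpow x (m - 1) j) i|
        ≤ ((m : ℝ) - 1) * norm1 (X (k+1) - x) := by
      calc ∑ i, |R.mulVec (fun j => kpow (X (k+1)) (m - 1) j - kpow x (m - 1) j) i|
          ≤ ∑ j, |kpow (X (k+1)) (m - 1) j - kpow x (m - 1) j| :=
            mulVec_norm1_le R hR _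
        _ ≤ ((m - 1 : ℕ) : ℝ) * ∑ i, |X (k+1) i - x i| :=
            kpow_diff (X (k+1)) x (hXs (k+1)) hx (m - 1)
        _ = ((m : ℝ) - 1) * norm1 (X (k+1) - x) := by
            rw [hpc, norm1]
            simp only [Pi.sub_apply]
    have hb : norm1 (X (k+1) - x)
        ≤ (α / ((m : ℝ) - 1)) * α * (((m : ℝ) - 1) * norm1 (X (k+1) - x))
          + (1 - α / ((m : ℝ) - 1)) * norm1 (X k - x) := by
      calc norm1 (X (k+1) - x)
          = ∑ i, |(α / ((m : ℝ) - 1)) * α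
              * R.mulVec (fun j => kpow (X (k+1)) (m - 1) j - kpow x (m - 1) j) i
              + (1 - α / ((m : ℝ) - 1)) * (X k - x) i| := by
            rw [norm1]
            exact Finset.sum_congr rfl fun i _ => by rw [hdiff i]
        _ ≤ ∑ i, ((α / ((m : ℝ) - 1)) * α
              * |R.mulVec (fun j => kpow (X (k+1)) (m - 1) j - kpow x (m - 1) j) i|
              + (1 - α / ((m : ℝ) - 1)) * |(X k - x) i|) := by
            apply Finset.sum_le_sum
            intro i _
            refine (abs_add_le _ _).trans ?_
            have e1 : |(α / ((m : ℝ) - 1)) * α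
                * R.mulVec (fun j => kpow (X (k+1)) (m - 1) j - kpow x (m - 1) j) i|
                = (α / ((m : ℝ) - 1)) * α
                  * |R.mulVec (fun j => kpow (X (k+1)) (m - 1) j - kpow x (m - 1) j) i| := by
              rw [abs_mul]
              congr 1
              exact abs_of_nonneg (by positivity)
            have e2 : |(1 - α / ((m : ℝ) - 1)) * (X k - x) i|
                = (1 - α / ((m : ℝ) - 1)) * |(X k - x) i| := by
              rw [abs_mul, abs_of_nonneg hnum0.le]
            rw [e1, e2]
        _ = (α / ((m : ℝ) - 1)) * α
              * (∑ i, |R.mulVec (fun j => kpow (X (k+1)) (m - 1) j - kpow x (m - 1) j) i|)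
              + (1 - α / ((m : ℝ) - 1)) * norm1 (X k - x) := by
            rw [Finset.sum_add_distrib, ← Finset.mul_sum, ← Finset.mul_sum, norm1]
        _ ≤ (α / ((m : ℝ) - 1)) * α * (((m : ℝ) - 1) * norm1 (X (k+1) - x))
              + (1 - α / ((m : ℝ) - 1)) * norm1 (X k - x) := by
            have := mul_le_mul_of_nonneg_left hRd
              (by positivity : (0:ℝ) ≤ (α / ((m : ℝ) - 1)) * α)
            linarith
    have hc : (α / ((m : ℝ) - 1)) * α * ((m : ℝ) - 1) = α ^ 2 := by
      field_simp
    have hb2 : norm1 (X (k+1) - x) ≤ α ^ 2 * norm1 (X (k+1) - x)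
        + (1 - α / ((m : ℝ) - 1)) * norm1 (X k - x) := by
      calc norm1 (X (k+1) - x)
          ≤ (α / ((m : ℝ) - 1)) * α * (((m : ℝ) - 1) * norm1 (X (k+1) - x))
            + (1 - α / ((m : ℝ) - 1)) * norm1 (X k - x) := hb
        _ = ((α / ((m : ℝ) - 1)) * α * ((m : ℝ) - 1)) * norm1 (X (k+1) - x)
            + (1 - α / ((m : ℝ) - 1)) * norm1 (X k - x) := by ring
        _ = α ^ 2 * norm1 (X (k+1) - x)
            + (1 - α / ((m : ℝ) - 1)) * norm1 (X k - x) := by rw [hc]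
    rw [div_mul_eq_mul_div, le_div_iff₀ hrate0]
    nlinarith [hb2]
  refine ⟨?_, hrlt1⟩
  intro k
  induction k with
  | zero => simp
  | succ k ih =>
      calc norm1 (X (k+1) - x)
          ≤ ((1 - α / ((m : ℝ) - 1)) / (1 - α ^ 2)) * norm1 (X k - x) := key k
        _ ≤ ((1 - α / ((m : ℝ) - 1)) / (1 - α ^ 2))
            * (((1 - α / ((m : ℝ) - 1)) / (1 - α ^ 2)) ^ k * norm1 (X 0 - x)) :=
            mul_le_mul_of_nonneg_left ih hr0
        _ = ((1 - α / ((m : ℝ) - 1)) / (1 - α ^ 2)) ^ (k+1) * norm1 (X 0 - x) := by ring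
end
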